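/- Let d ≥ 2 with char(k) ∤ d, and let f = x^d y + y^d z + z^d w ∈ S = k[x,y,z,w] with gradient ideal J = (x^{d−1}y, x^d + d y^{d−1}z, y^d + d z^{d−1}w, z^d). Then the saturation J^sat = J : (x,y,z,w)^∞ equals (J, x^{d−1}z^{d−1}), and J^sat/J is the socle of S/J, so the socle degree of S/J is 2d − 2. -/

import Mathlib

open MvPolynomial

namespace Sat17

noncomputable section

def mk4 (a b c e : ℕ) : Fin 4 →₀ ℕ :=
  Finsupp.single 0 a + Finsupp.single 1 b + Finsupp.single 2 c + Finsupp.single 3 e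

@[simp] lemma mk4_apply0 (a b c e : ℕ) : mk4 a b c e 0 = a := by
  simp [mk4, Finsupp.single_apply]
@[simp] lemma mk4_apply1 (a b c e : ℕ) : mk4 a b c e 1 = b := by
  simp [mk4, Finsupp.single_apply]
@[simp] lemma mk4_apply2 (a b c e : ℕ) : mk4 a b c e 2 = c := by
  simp [mk4, Finsupp.single_apply]
@[simp] lemma mk4_apply3 (a b c e : ℕ) : mk4 a b c e 3 = e := by
  simp [mk4, Finsupp.single_apply]

lemma mk4_add (a b c e a' b' c' e' : ℕ) :
    mk4 a b c e + mk4 a' b' c' e' = mk4 (a + a') (b + b') (c + c') (e + e') := by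
  simp only [mk4, Finsupp.single_add]; abel

lemma eq_mk4 (m : Fin 4 →₀ ℕ) : m = mk4 (m 0) (m 1) (m 2) (m 3) := by
  ext i; fin_cases i <;> simp [mk4, Finsupp.single_apply]

/-! normal form data -/

def nfQ (d : ℕ) (m : Fin 4 →₀ ℕ) : ℕ := m 0 / d
def nfA (d : ℕ) (m : Fin 4 →₀ ℕ) : ℕ := m 0 % d
def nfB (d : ℕ) (m : Fin 4 →₀ ℕ) : ℕ := m 1 + nfQ d m * (d - 1)
def nfQ' (d : ℕ) (m : Fin 4 →₀ ℕ) : ℕ := nfB d m / d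
def nfB' (d : ℕ) (m : Fin 4 →₀ ℕ) : ℕ := nfB d m % d
def nfC (d : ℕ) (m : Fin 4 →₀ ℕ) : ℕ := m 2 + nfQ d m + nfQ' d m * (d - 1)
def nfE (d : ℕ) (m : Fin 4 →₀ ℕ) : ℕ := m 3 + nfQ' d m

def dead (d : ℕ) (m : Fin 4 →₀ ℕ) : Prop :=
  d ≤ nfC d m ∨ (nfA d m = d - 1 ∧ (1 ≤ nfB' d m ∨ nfC d m = d - 1))

instance (d : ℕ) (m : Fin 4 →₀ ℕ) : Decidable (dead d m) := by
  unfold dead; infer_instance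

variable (k : Type) [Field k]

def Lmon (d : ℕ) (m : Fin 4 →₀ ℕ) : MvPolynomial (Fin 4) k :=
  if dead d m then 0
  else (-(d : k)) ^ (nfQ d m + nfQ' d m) •
    monomial (mk4 (nfA d m) (nfB' d m) (nfC d m) (nfE d m)) (1 : k)

lemma Lmon_step (d : ℕ) (m m' : Fin 4 →₀ ℕ)
    (hA : nfA d m = nfA d m') (hB : nfB' d m = nfB' d m')
    (hC : nfC d m = nfC d m') (hE : nfE d m = nfE d m')
    (hQ : nfQ d m + nfQ' d m = (nfQ d m' + nfQ' d m') + 1) :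
    Lmon k d m = (-(d : k)) • Lmon k d m' := by
  simp only [Lmon, dead, hA, hB, hC, hE, hQ]
  split_ifs with h
  · show (0 : MvPolynomial (Fin 4) k) = (-(d : k)) • Lmon k d m'
    rw [Lmon, if_pos (show dead d m' from h), smul_zero]
  · show _ = (-(d : k)) • Lmon k d m'
    rw [Lmon, if_neg (show ¬ dead d m' from h), pow_succ, mul_comm, mul_smul]

/-- the rewrite step for `g₂ = x^d + d y^{d-1} z` -/
lemma Lmon_g2 (d : ℕ) (hd : 2 ≤ d) (a b c e : ℕ) :
    Lmon k d (mk4 (a + d) b c e)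
      = (-(d : k)) • Lmon k d (mk4 a (b + (d - 1)) (c + 1) e) := by
  have hd0 : 0 < d := by omega
  have hq : (a + d) / d = a / d + 1 := Nat.add_div_right a hd0
  have hr : (a + d) % d = a % d := Nat.add_mod_right a d
  have hb : nfB d (mk4 (a + d) b c e) = nfB d (mk4 a (b + (d - 1)) (c + 1) e) := by
    unfold nfB nfQ
    simp only [mk4_apply0, mk4_apply1, hq]
    generalize a / d = q
    generalize d - 1 = D
    ring
  apply Lmon_step
  · unfold nfA; simp only [mk4_apply0, hr]
  · unfold nfB'; rw [hb]
  · unfold nfC nfQ nfQ'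
    rw [hb]
    simp only [mk4_apply0, mk4_apply2, hq]
    omega
  · unfold nfE nfQ'; rw [hb]; simp only [mk4_apply3]
  · unfold nfQ nfQ'; rw [hb]; simp only [mk4_apply0, hq]; omega

/-- the rewrite step for `g₃ = y^d + d z^{d-1} w` -/
lemma Lmon_g3 (d : ℕ) (hd : 2 ≤ d) (a b c e : ℕ) :
    Lmon k d (mk4 a (b + d) c e)
      = (-(d : k)) • Lmon k d (mk4 a b (c + (d - 1)) (e + 1)) := by
  have hd0 : 0 < d := by omega
  have hQeq : nfQ d (mk4 a (b + d) c e) = nfQ d (mk4 a b (c + (d - 1)) (e + 1)) := by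
    unfold nfQ; simp only [mk4_apply0]
  have hb : nfB d (mk4 a (b + d) c e) = nfB d (mk4 a b (c + (d - 1)) (e + 1)) + d := by
    unfold nfB
    rw [hQeq]
    simp only [mk4_apply1]
    omega
  have hq' : nfQ' d (mk4 a (b + d) c e) = nfQ' d (mk4 a b (c + (d - 1)) (e + 1)) + 1 := by
    unfold nfQ'; rw [hb, Nat.add_div_right _ hd0]
  apply Lmon_step
  · unfold nfA; simp only [mk4_apply0]
  · unfold nfB'; rw [hb, Nat.add_mod_right]
  · unfold nfC
    rw [hQeq, hq']
    simp only [mk4_apply2]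
    generalize nfQ' d (mk4 a b (c + (d - 1)) (e + 1)) = q2
    generalize nfQ d (mk4 a b (c + (d - 1)) (e + 1)) = q
    generalize hD : d - 1 = D
    have : (q2 + 1) * D = q2 * D + D := by ring
    omega
  · unfold nfE; rw [hq']; simp only [mk4_apply3]; omega
  · rw [hQeq, hq']; omega

/-- dead whenever divisible by `x^{d-1} y` -/
lemma Lmon_zero1 (d : ℕ) (hd : 2 ≤ d) (m : Fin 4 →₀ ℕ)
    (h0 : d - 1 ≤ m 0) (h1 : 1 ≤ m 1) : Lmon k d m = 0 := by
  have hd0 : 0 < d := by omega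
  rw [Lmon, if_pos]
  simp only [dead, nfA, nfB', nfC, nfE, nfQ', nfB, nfQ]
  rcases lt_or_ge (m 0) d with h | h
  · have hq : m 0 / d = 0 := Nat.div_eq_of_lt h
    have hr : m 0 % d = m 0 := Nat.mod_eq_of_lt h
    have h00 : m 0 = d - 1 := by omega
    simp only [hq, Nat.zero_mul, Nat.add_zero, hr]
    rcases lt_or_ge (m 1) d with h2 | h2
    · right
      exact ⟨h00, Or.inl (by rw [Nat.mod_eq_of_lt h2]; omega)⟩
    · have hq2 : 1 ≤ m 1 / d := (Nat.one_le_div_iff hd0).2 h2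
      have hmul : d - 1 ≤ (m 1 / d) * (d - 1) := by
        simpa using Nat.mul_le_mul_right (d - 1) hq2
      rcases lt_or_ge (m 2 + 0 + m 1 / d * (d - 1)) d with h3 | h3
      · right; exact ⟨h00, Or.inr (by omega)⟩
      · left; exact h3
  · have hq : 1 ≤ m 0 / d := (Nat.one_le_div_iff hd0).2 h
    have hmul : d - 1 ≤ (m 0 / d) * (d - 1) := by
      simpa using Nat.mul_le_mul_right (d - 1) hq
    have hb : d ≤ m 1 + m 0 / d * (d - 1) := by omega
    have hq2 : 1 ≤ (m 1 + m 0 / d * (d - 1)) / d := (Nat.one_le_div_iff hd0).2 hb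
    have hmul2 : d - 1 ≤ ((m 1 + m 0 / d * (d - 1)) / d) * (d - 1) := by
      simpa using Nat.mul_le_mul_right (d - 1) hq2
    left; omega

/-- dead whenever divisible by `x^{d-1} z^{d-1}` -/
lemma Lmon_zero5 (d : ℕ) (hd : 2 ≤ d) (m : Fin 4 →₀ ℕ)
    (h0 : d - 1 ≤ m 0) (h2 : d - 1 ≤ m 2) : Lmon k d m = 0 := by
  have hd0 : 0 < d := by omega
  rw [Lmon, if_pos]
  simp only [dead, nfA, nfB', nfC, nfE, nfQ', nfB, nfQ]
  rcases lt_or_ge (m 0) d with h | h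
  · have hq : m 0 / d = 0 := Nat.div_eq_of_lt h
    have hr : m 0 % d = m 0 := Nat.mod_eq_of_lt h
    have h00 : m 0 = d - 1 := by omega
    simp only [hq, Nat.zero_mul, Nat.add_zero, hr]
    rcases Nat.eq_zero_or_pos (m 1 / d) with hq2 | hq2
    · simp only [hq2, Nat.zero_mul, Nat.add_zero]
      rcases lt_or_ge (m 2) d with h3 | h3
      · right; exact ⟨h00, Or.inr (by omega)⟩
      · left; omega
    · have hmul : d - 1 ≤ (m 1 / d) * (d - 1) := by
        simpa using Nat.mul_le_mul_right (d - 1) hq2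
      left; omega
  · have hq : 1 ≤ m 0 / d := (Nat.one_le_div_iff hd0).2 h
    left; omega

/-- dead whenever divisible by `z^d` -/
lemma Lmon_zero4 (d : ℕ) (m : Fin 4 →₀ ℕ) (h : d ≤ m 2) : Lmon k d m = 0 := by
  rw [Lmon, if_pos]
  simp only [dead, nfC]
  left; omega

lemma single3_eq : (Finsupp.single 3 1 : Fin 4 →₀ ℕ) = mk4 0 0 0 1 := by
  simp [mk4]

/-- multiplication by `w` commutes with the normal form -/
lemma Lmon_w (d : ℕ) (m : Fin 4 →₀ ℕ) :
    Lmon k d (m + Finsupp.single 3 1) = X 3 * Lmon k d m := by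
  obtain ⟨a, b, c, e, rfl⟩ : ∃ a b c e, m = mk4 a b c e := ⟨_, _, _, _, eq_mk4 m⟩
  have hm : mk4 a b c e + Finsupp.single 3 1 = mk4 a b c (e + 1) := by
    rw [single3_eq, mk4_add]
    norm_num
  rw [hm]
  have hA : nfA d (mk4 a b c (e + 1)) = nfA d (mk4 a b c e) := by
    simp only [nfA, mk4_apply0]
  have hQ : nfQ d (mk4 a b c (e + 1)) = nfQ d (mk4 a b c e) := by
    simp only [nfQ, mk4_apply0]
  have hB : nfB d (mk4 a b c (e + 1)) = nfB d (mk4 a b c e) := by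
    simp only [nfB, hQ, mk4_apply1]
  have hB' : nfB' d (mk4 a b c (e + 1)) = nfB' d (mk4 a b c e) := by
    simp only [nfB', hB]
  have hQ' : nfQ' d (mk4 a b c (e + 1)) = nfQ' d (mk4 a b c e) := by
    simp only [nfQ', hB]
  have hC : nfC d (mk4 a b c (e + 1)) = nfC d (mk4 a b c e) := by
    simp only [nfC, hQ, hQ', mk4_apply2]
  have hE : nfE d (mk4 a b c (e + 1)) = nfE d (mk4 a b c e) + 1 := by
    simp only [nfE, hQ', mk4_apply3]; omega
  simp only [Lmon, dead, hA, hB', hC, hQ, hQ', hE]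
  split_ifs with h
  · show (0 : MvPolynomial (Fin 4) k) = X 3 * Lmon k d (mk4 a b c e)
    rw [Lmon, if_pos (show dead d (mk4 a b c e) from h), mul_zero]
  · show _ = X 3 * Lmon k d (mk4 a b c e)
    rw [Lmon, if_neg (show ¬ dead d (mk4 a b c e) from h), mul_smul_comm]
    congr 1
    have hX3 : (X 3 : MvPolynomial (Fin 4) k) = monomial (mk4 0 0 0 1) 1 := by
      rw [X, single3_eq]
    rw [hX3, monomial_mul, one_mul, mk4_add]
    have h4 : mk4 (0 + nfA d (mk4 a b c e)) (0 + nfB' d (mk4 a b c e))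
        (0 + nfC d (mk4 a b c e)) (1 + nfE d (mk4 a b c e))
        = mk4 (nfA d (mk4 a b c e)) (nfB' d (mk4 a b c e))
          (nfC d (mk4 a b c e)) (nfE d (mk4 a b c e) + 1) := by
      norm_num [Nat.add_comm]
    rw [h4]

/-! ### The generators -/

def gen1 (d : ℕ) : MvPolynomial (Fin 4) k := monomial (mk4 (d - 1) 1 0 0) 1
def gen2 (d : ℕ) : MvPolynomial (Fin 4) k :=
  monomial (mk4 d 0 0 0) 1 + monomial (mk4 0 (d - 1) 1 0) (d : k)
def gen3 (d : ℕ) : MvPolynomial (Fin 4) k :=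
  monomial (mk4 0 d 0 0) 1 + monomial (mk4 0 0 (d - 1) 1) (d : k)
def gen4 (d : ℕ) : MvPolynomial (Fin 4) k := monomial (mk4 0 0 d 0) 1
def gen5 (d : ℕ) : MvPolynomial (Fin 4) k := monomial (mk4 (d - 1) 0 (d - 1) 0) 1

def KK (d : ℕ) : Ideal (MvPolynomial (Fin 4) k) :=
  Ideal.span {gen1 k d, gen2 k d, gen3 k d, gen4 k d, gen5 k d}

/-! ### The linear normal-form map -/

def L (d : ℕ) : MvPolynomial (Fin 4) k →ₗ[k] MvPolynomial (Fin 4) k :=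
  (basisMonomials (Fin 4) k).constr k fun m => Lmon k d m

lemma L_monomial (d : ℕ) (m : Fin 4 →₀ ℕ) (r : k) :
    L k d (monomial m r) = r • Lmon k d m := by
  have h1 : (monomial m r : MvPolynomial (Fin 4) k) = r • monomial m 1 := by
    rw [smul_monomial, smul_eq_mul, mul_one]
  rw [h1, map_smul]
  congr 1
  have hb : basisMonomials (Fin 4) k m = monomial m 1 :=
    congrFun (coe_basisMonomials (Fin 4) k) m
  rw [← hb]
  exact Module.Basis.constr_basis _ k _ m

lemma L_gen_mul (d : ℕ) (hd : 2 ≤ d) (g : MvPolynomial (Fin 4) k)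
    (hg : g ∈ ({gen1 k d, gen2 k d, gen3 k d, gen4 k d, gen5 k d} :
      Set (MvPolynomial (Fin 4) k))) (h : MvPolynomial (Fin 4) k) :
    L k d (h * g) = 0 := by
  induction h using MvPolynomial.induction_on' with
  | add p q hp hq => rw [add_mul, map_add, hp, hq, add_zero]
  | monomial ν r =>
    obtain ⟨a, b, c, e, rfl⟩ : ∃ a b c e, ν = mk4 a b c e := ⟨_, _, _, _, eq_mk4 ν⟩
    simp only [Set.mem_insert_iff, Set.mem_singleton_iff] at hg
    rcases hg with rfl | rfl | rfl | rfl | rfl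
    · rw [gen1, monomial_mul, mul_one, mk4_add, L_monomial,
        Lmon_zero1 k d hd _ (by simp) (by simp), smul_zero]
    · rw [gen2, mul_add, monomial_mul, monomial_mul, mul_one, mk4_add, mk4_add,
        map_add, L_monomial, L_monomial]
      have e1 : a + d = a + d := rfl
      have h2 := Lmon_g2 k d hd a b c e
      have hfix : mk4 (a + d) (b + 0) (c + 0) (e + 0) = mk4 (a + d) b c e := by norm_num
      have hfix2 : mk4 (a + 0) (b + (d - 1)) (c + 1) (e + 0)
          = mk4 a (b + (d - 1)) (c + 1) e := by norm_num
      rw [hfix, hfix2, h2, smul_smul, ← add_smul]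
      have hz : r * -(d : k) + r * (d : k) = 0 := by ring
      rw [hz, zero_smul]
    · rw [gen3, mul_add, monomial_mul, monomial_mul, mul_one, mk4_add, mk4_add,
        map_add, L_monomial, L_monomial]
      have h3 := Lmon_g3 k d hd a b c e
      have hfix : mk4 (a + 0) (b + d) (c + 0) (e + 0) = mk4 a (b + d) c e := by norm_num
      have hfix2 : mk4 (a + 0) (b + 0) (c + (d - 1)) (e + 1)
          = mk4 a b (c + (d - 1)) (e + 1) := by norm_num
      rw [hfix, hfix2, h3, smul_smul, ← add_smul]
      have hz : r * -(d : k) + r * (d : k) = 0 := by ring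
      rw [hz, zero_smul]
    · rw [gen4, monomial_mul, mul_one, mk4_add, L_monomial,
        Lmon_zero4 k d _ (by simp), smul_zero]
    · rw [gen5, monomial_mul, mul_one, mk4_add, L_monomial,
        Lmon_zero5 k d hd _ (by simp) (by simp), smul_zero]

lemma L_KK (d : ℕ) (hd : 2 ≤ d) {s : MvPolynomial (Fin 4) k} (hs : s ∈ KK k d) :
    L k d s = 0 := by
  have main : ∀ t, t ∈ KK k d → ∀ h, L k d (h * t) = 0 := by
    intro t ht
    refine Submodule.span_induction ?_ ?_ ?_ ?_ ht
    · intro g hg h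
      exact L_gen_mul k d hd g hg h
    · intro h; rw [mul_zero, map_zero]
    · intro u v _ _ hu hv h
      rw [mul_add, map_add, hu, hv, add_zero]
    · intro a u _ hu h
      rw [smul_eq_mul, ← mul_assoc]
      exact hu (h * a)
  simpa using main s hs 1

lemma gen_mem (d : ℕ) (g : MvPolynomial (Fin 4) k)
    (hg : g ∈ ({gen1 k d, gen2 k d, gen3 k d, gen4 k d, gen5 k d} :
      Set (MvPolynomial (Fin 4) k))) : g ∈ KK k d :=
  Ideal.subset_span hg

lemma monomial_sub_Lmon_mem (d : ℕ) (hd : 2 ≤ d) (m : Fin 4 →₀ ℕ) :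
    monomial m 1 - Lmon k d m ∈ KK k d := by
  have key : ∀ n a b c e, a + b ≤ n →
      monomial (mk4 a b c e) 1 - Lmon k d (mk4 a b c e) ∈ KK k d := by
    intro n
    induction n using Nat.strong_induction_on with
    | _ n ih =>
      intro a b c e hab
      rcases le_or_gt d a with ha | ha
      · -- use gen2
        obtain ⟨a', rfl⟩ : ∃ a', a = a' + d := ⟨a - d, by omega⟩
        have hprod : monomial (mk4 a' b c e) 1 * gen2 k d
            = monomial (mk4 (a' + d) b c e) 1
              + (d : k) • monomial (mk4 a' (b + (d - 1)) (c + 1) e) 1 := by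
          rw [gen2, mul_add, monomial_mul, monomial_mul, mul_one, mk4_add, mk4_add]
          have h1 : mk4 (a' + d) (b + 0) (c + 0) (e + 0) = mk4 (a' + d) b c e := by norm_num
          have h2 : mk4 (a' + 0) (b + (d - 1)) (c + 1) (e + 0)
              = mk4 a' (b + (d - 1)) (c + 1) e := by norm_num
          rw [h1, h2, smul_monomial, smul_eq_mul, mul_one, one_mul]
        have heq : monomial (mk4 (a' + d) b c e) 1 - Lmon k d (mk4 (a' + d) b c e)
            = monomial (mk4 a' b c e) 1 * gen2 k d
              - (d : k) • (monomial (mk4 a' (b + (d - 1)) (c + 1) e) 1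
                - Lmon k d (mk4 a' (b + (d - 1)) (c + 1) e)) := by
          rw [Lmon_g2 k d hd, hprod, neg_smul, smul_sub]
          abel
        rw [heq]
        refine Submodule.sub_mem _ (Ideal.mul_mem_left _ _ (gen_mem k d _ (by simp))) ?_
        rw [smul_eq_C_mul]
        refine Ideal.mul_mem_left _ _ (ih (a' + (b + (d - 1))) (by omega) _ _ _ _ le_rfl)
      rcases le_or_gt d b with hb | hb
      · -- use gen3
        obtain ⟨b', rfl⟩ : ∃ b', b = b' + d := ⟨b - d, by omega⟩
        have hprod : monomial (mk4 a b' c e) 1 * gen3 k d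
            = monomial (mk4 a (b' + d) c e) 1
              + (d : k) • monomial (mk4 a b' (c + (d - 1)) (e + 1)) 1 := by
          rw [gen3, mul_add, monomial_mul, monomial_mul, mul_one, mk4_add, mk4_add]
          have h1 : mk4 (a + 0) (b' + d) (c + 0) (e + 0) = mk4 a (b' + d) c e := by norm_num
          have h2 : mk4 (a + 0) (b' + 0) (c + (d - 1)) (e + 1)
              = mk4 a b' (c + (d - 1)) (e + 1) := by norm_num
          rw [h1, h2, smul_monomial, smul_eq_mul, mul_one, one_mul]
        have heq : monomial (mk4 a (b' + d) c e) 1 - Lmon k d (mk4 a (b' + d) c e)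
            = monomial (mk4 a b' c e) 1 * gen3 k d
              - (d : k) • (monomial (mk4 a b' (c + (d - 1)) (e + 1)) 1
                - Lmon k d (mk4 a b' (c + (d - 1)) (e + 1))) := by
          rw [Lmon_g3 k d hd, hprod, neg_smul, smul_sub]
          abel
        rw [heq]
        refine Submodule.sub_mem _ (Ideal.mul_mem_left _ _ (gen_mem k d _ (by simp))) ?_
        rw [smul_eq_C_mul]
        refine Ideal.mul_mem_left _ _ (ih (a + b') (by omega) _ _ _ _ le_rfl)
      · -- terminal case
        have hq : nfQ d (mk4 a b c e) = 0 := by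
          simp only [nfQ, mk4_apply0]; exact Nat.div_eq_of_lt ha
        have hr : nfA d (mk4 a b c e) = a := by
          simp only [nfA, mk4_apply0]; exact Nat.mod_eq_of_lt ha
        have hB : nfB d (mk4 a b c e) = b := by
          simp only [nfB, hq, mk4_apply1]; omega
        have hq' : nfQ' d (mk4 a b c e) = 0 := by
          simp only [nfQ', hB]; exact Nat.div_eq_of_lt hb
        have hr' : nfB' d (mk4 a b c e) = b := by
          simp only [nfB', hB]; exact Nat.mod_eq_of_lt hb
        have hC : nfC d (mk4 a b c e) = c := by
          simp only [nfC, hq, hq', mk4_apply2]; omega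
        have hE : nfE d (mk4 a b c e) = e := by
          simp only [nfE, hq', mk4_apply3]
          omega
        by_cases hdead : dead d (mk4 a b c e)
        · rw [Lmon, if_pos hdead, sub_zero]
          rw [dead, hr, hr', hC] at hdead
          rcases hdead with h3 | ⟨h4, h5 | h5⟩
          · -- divisible by z^d : gen4
            obtain ⟨c', rfl⟩ : ∃ c', c = c' + d := ⟨c - d, by omega⟩
            have : monomial (mk4 a b (c' + d) e) 1
                = monomial (mk4 a b c' e) 1 * gen4 k d := by
              rw [gen4, monomial_mul, mul_one, mk4_add]
              norm_num
            rw [this]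
            exact Ideal.mul_mem_left _ _ (gen_mem k d _ (by simp))
          · -- divisible by x^{d-1} y : gen1
            obtain ⟨b', rfl⟩ : ∃ b', b = b' + 1 := ⟨b - 1, by omega⟩
            have : monomial (mk4 a (b' + 1) c e) 1
                = monomial (mk4 0 b' c e) 1 * gen1 k d := by
              rw [gen1, monomial_mul, mul_one, mk4_add, h4]
              norm_num
            rw [this]
            exact Ideal.mul_mem_left _ _ (gen_mem k d _ (by simp))
          · -- divisible by x^{d-1} z^{d-1} : gen5
            have : monomial (mk4 a b c e) 1
                = monomial (mk4 0 b 0 e) 1 * gen5 k d := by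
              rw [gen5, monomial_mul, mul_one, mk4_add, h4, h5]
              norm_num
            rw [this]
            exact Ideal.mul_mem_left _ _ (gen_mem k d _ (by simp))
        · rw [Lmon, if_neg hdead, hq, hq', hr, hr', hC, hE, pow_zero, one_smul,
            sub_self]
          exact Submodule.zero_mem _
  obtain ⟨a, b, c, e, rfl⟩ : ∃ a b c e, m = mk4 a b c e := ⟨_, _, _, _, eq_mk4 m⟩
  exact key (a + b) a b c e le_rfl

lemma sub_L_mem (d : ℕ) (hd : 2 ≤ d) (s : MvPolynomial (Fin 4) k) :
    s - L k d s ∈ KK k d := by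
  induction s using MvPolynomial.induction_on' with
  | monomial m r =>
    rw [L_monomial]
    have h1 : (monomial m r : MvPolynomial (Fin 4) k) - r • Lmon k d m
        = r • (monomial m 1 - Lmon k d m) := by
      rw [smul_sub, smul_monomial, smul_eq_mul, mul_one]
    rw [h1, smul_eq_C_mul]
    exact Ideal.mul_mem_left _ _ (monomial_sub_Lmon_mem k d hd m)
  | add p q hp hq =>
    rw [map_add]
    have : p + q - (L k d p + L k d q) = (p - L k d p) + (q - L k d q) := by abel
    rw [this]
    exact Submodule.add_mem _ hp hq

lemma L_X3_mul (d : ℕ) (s : MvPolynomial (Fin 4) k) :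
    L k d (X 3 * s) = X 3 * L k d s := by
  induction s using MvPolynomial.induction_on' with
  | monomial m r =>
    have hXm : (X 3 : MvPolynomial (Fin 4) k) * monomial m r
        = monomial (m + Finsupp.single 3 1) r := by
      rw [X, monomial_mul, one_mul, add_comm]
    rw [hXm, L_monomial, L_monomial, Lmon_w, mul_smul_comm]
  | add p q hp hq =>
    rw [mul_add, map_add, map_add, hp, hq, mul_add]

lemma L_X3_pow_mul (d : ℕ) (N : ℕ) (s : MvPolynomial (Fin 4) k) :
    L k d (X 3 ^ N * s) = X 3 ^ N * L k d s := by
  induction N with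
  | zero => simp
  | succ n ihn =>
    rw [pow_succ, mul_comm (X 3 ^ n) (X 3), mul_assoc, L_X3_mul, ihn, ← mul_assoc]

/-! ### expanded forms of the generators -/

lemma gen1_eq (d : ℕ) : gen1 k d = X 0 ^ (d - 1) * X 1 := by
  rw [gen1, X_pow_eq_monomial, X, monomial_mul, mul_one]
  congr 1
  simp [mk4]

lemma gen2_eq (d : ℕ) :
    gen2 k d = X 0 ^ d + (d : MvPolynomial (Fin 4) k) * X 1 ^ (d - 1) * X 2 := by
  rw [gen2, X_pow_eq_monomial]
  congr 1
  · congr 1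
    simp [mk4]
  · rw [show ((d : ℕ) : MvPolynomial (Fin 4) k) = C ((d : ℕ) : k) from
      (map_natCast (C : k →+* MvPolynomial (Fin 4) k) d).symm]
    rw [X_pow_eq_monomial, X, C_mul_monomial, monomial_mul]
    congr 1 <;> simp [mk4]

lemma gen3_eq (d : ℕ) :
    gen3 k d = X 1 ^ d + (d : MvPolynomial (Fin 4) k) * X 2 ^ (d - 1) * X 3 := by
  rw [gen3, X_pow_eq_monomial]
  congr 1
  · congr 1
    simp [mk4]
  · rw [show ((d : ℕ) : MvPolynomial (Fin 4) k) = C ((d : ℕ) : k) from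
      (map_natCast (C : k →+* MvPolynomial (Fin 4) k) d).symm]
    rw [X_pow_eq_monomial, X, C_mul_monomial, monomial_mul]
    congr 1 <;> simp [mk4]

lemma gen4_eq (d : ℕ) : gen4 k d = X 2 ^ d := by
  rw [gen4, X_pow_eq_monomial]
  congr 1
  simp [mk4]

lemma gen5_eq (d : ℕ) : gen5 k d = X 0 ^ (d - 1) * X 2 ^ (d - 1) := by
  rw [gen5, X_pow_eq_monomial, X_pow_eq_monomial, monomial_mul, mul_one]
  congr 1
  simp [mk4]

end

end Sat17

set_option maxHeartbeats 1000000 in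
open Sat17 in
private lemma main_statement
    (k : Type) [Field k] (d : ℕ) (hd : 2 ≤ d) (hchar : (d : k) ≠ 0)
    (x y z w f : MvPolynomial (Fin 4) k)
    (hx : x = X 0) (hy : y = X 1) (hz : z = X 2) (hw : w = X 3)
    (hf : f = x ^ d * y + y ^ d * z + z ^ d * w)
    (J m : Ideal (MvPolynomial (Fin 4) k))
    (hJ : J = Ideal.span {x ^ (d - 1) * y,
      x ^ d + (d : MvPolynomial (Fin 4) k) * y ^ (d - 1) * z,
      y ^ d + (d : MvPolynomial (Fin 4) k) * z ^ (d - 1) * w, z ^ d})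
    (hm : m = Ideal.span {x, y, z, w}) :
    Ideal.span (Set.range fun i : Fin 4 => MvPolynomial.pderiv i f) = J ∧
    (∀ s : MvPolynomial (Fin 4) k,
      (∃ N : ℕ, ∀ g ∈ m ^ N, g * s ∈ J) ↔
        s ∈ J ⊔ Ideal.span {x ^ (d - 1) * z ^ (d - 1)}) ∧
    (∀ s : MvPolynomial (Fin 4) k,
      (∀ g ∈ m, g * s ∈ J) ↔ s ∈ J ⊔ Ideal.span {x ^ (d - 1) * z ^ (d - 1)}) ∧
    MvPolynomial.IsHomogeneous (x ^ (d - 1) * z ^ (d - 1)) (2 * d - 2) ∧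
    x ^ (d - 1) * z ^ (d - 1) ∉ J := by
  subst hx hy hz hw hf hJ hm
  obtain ⟨e, rfl⟩ : ∃ e, d = e + 2 := ⟨d - 2, by omega⟩
  have hd2 : 2 ≤ e + 2 := by omega
  have h1 : e + 2 - 1 = e + 1 := by omega
  simp only [h1]
  -- expanded generators
  have hg1 : gen1 k (e + 2) = X 0 ^ (e + 1) * X 1 := by rw [gen1_eq, h1]
  have hg2 : gen2 k (e + 2)
      = X 0 ^ (e + 2) + ((e + 2 : ℕ) : MvPolynomial (Fin 4) k) * X 1 ^ (e + 1) * X 2 := by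
    rw [gen2_eq, h1]
  have hg3 : gen3 k (e + 2)
      = X 1 ^ (e + 2) + ((e + 2 : ℕ) : MvPolynomial (Fin 4) k) * X 2 ^ (e + 1) * X 3 := by
    rw [gen3_eq, h1]
  have hg4 : gen4 k (e + 2) = X 2 ^ (e + 2) := gen4_eq k (e + 2)
  have hg5 : gen5 k (e + 2) = X 0 ^ (e + 1) * X 2 ^ (e + 1) := by rw [gen5_eq, h1]
  have hDC : ((e + 2 : ℕ) : MvPolynomial (Fin 4) k) = C ((e + 2 : ℕ) : k) :=
    (map_natCast (C : k →+* MvPolynomial (Fin 4) k) (e + 2)).symm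
  have hJgen : Ideal.span {X 0 ^ (e + 1) * X 1,
      X 0 ^ (e + 2) + ((e + 2 : ℕ) : MvPolynomial (Fin 4) k) * X 1 ^ (e + 1) * X 2,
      X 1 ^ (e + 2) + ((e + 2 : ℕ) : MvPolynomial (Fin 4) k) * X 2 ^ (e + 1) * X 3,
      X 2 ^ (e + 2)}
      = Ideal.span {gen1 k (e + 2), gen2 k (e + 2), gen3 k (e + 2), gen4 k (e + 2)} := by
    rw [hg1, hg2, hg3, hg4]
  have hJleK : Ideal.span {gen1 k (e + 2), gen2 k (e + 2), gen3 k (e + 2), gen4 k (e + 2)}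
      ≤ KK k (e + 2) := by
    rw [KK]
    apply Ideal.span_mono
    intro t ht
    simp only [Set.mem_insert_iff, Set.mem_singleton_iff] at ht ⊢
    tauto
  have hsup : Ideal.span {gen1 k (e + 2), gen2 k (e + 2), gen3 k (e + 2), gen4 k (e + 2)}
      ⊔ Ideal.span {gen5 k (e + 2)} = KK k (e + 2) := by
    rw [KK, ← Ideal.span_union]
    congr 1
    ext t
    simp only [Set.mem_union, Set.mem_insert_iff, Set.mem_singleton_iff]
    tauto
  -- ne facts
  have h10 : (1 : Fin 4) ≠ 0 := by decide
  have h20 : (2 : Fin 4) ≠ 0 := by decide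
  have h30 : (3 : Fin 4) ≠ 0 := by decide
  have h01 : (0 : Fin 4) ≠ 1 := by decide
  have h21 : (2 : Fin 4) ≠ 1 := by decide
  have h31 : (3 : Fin 4) ≠ 1 := by decide
  have h02 : (0 : Fin 4) ≠ 2 := by decide
  have h12 : (1 : Fin 4) ≠ 2 := by decide
  have h32 : (3 : Fin 4) ≠ 2 := by decide
  have h03 : (0 : Fin 4) ≠ 3 := by decide
  have h13 : (1 : Fin 4) ≠ 3 := by decide
  have h23 : (2 : Fin 4) ≠ 3 := by decide
  -- partial derivatives
  set F : MvPolynomial (Fin 4) k :=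
    X 0 ^ (e + 2) * X 1 + X 1 ^ (e + 2) * X 2 + X 2 ^ (e + 2) * X 3 with hF
  have hp0 : pderiv (0 : Fin 4) F
      = ((e + 2 : ℕ) : MvPolynomial (Fin 4) k) * (X 0 ^ (e + 1) * X 1) := by
    simp only [hF, map_add, pderiv_mul, pderiv_pow, pderiv_X_self,
      pderiv_X_of_ne h10, pderiv_X_of_ne h20, pderiv_X_of_ne h30, h1]
    ring
  have hp1 : pderiv (1 : Fin 4) F
      = X 0 ^ (e + 2) + ((e + 2 : ℕ) : MvPolynomial (Fin 4) k) * X 1 ^ (e + 1) * X 2 := by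
    simp only [hF, map_add, pderiv_mul, pderiv_pow, pderiv_X_self,
      pderiv_X_of_ne h01, pderiv_X_of_ne h21, pderiv_X_of_ne h31, h1]
    ring
  have hp2 : pderiv (2 : Fin 4) F
      = X 1 ^ (e + 2) + ((e + 2 : ℕ) : MvPolynomial (Fin 4) k) * X 2 ^ (e + 1) * X 3 := by
    simp only [hF, map_add, pderiv_mul, pderiv_pow, pderiv_X_self,
      pderiv_X_of_ne h02, pderiv_X_of_ne h12, pderiv_X_of_ne h32, h1]
    ring
  have hp3 : pderiv (3 : Fin 4) F = X 2 ^ (e + 2) := by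
    simp only [hF, map_add, pderiv_mul, pderiv_pow, pderiv_X_self,
      pderiv_X_of_ne h03, pderiv_X_of_ne h13, pderiv_X_of_ne h23, h1]
    ring
  -- products of the variables with gen5 lie in the span of gen1..gen4
  have hx5 : X 0 * gen5 k (e + 2) = X 2 ^ (e + 1) * gen2 k (e + 2)
      - ((e + 2 : ℕ) : MvPolynomial (Fin 4) k) * (X 1 ^ (e + 1) * gen4 k (e + 2)) := by
    rw [hg2, hg4, hg5]; ring
  have hy5 : X 1 * gen5 k (e + 2) = X 2 ^ (e + 1) * gen1 k (e + 2) := by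
    rw [hg1, hg5]; ring
  have hz5 : X 2 * gen5 k (e + 2) = X 0 ^ (e + 1) * gen4 k (e + 2) := by
    rw [hg4, hg5]; ring
  have hinner : X 0 ^ (e + 1) * gen3 k (e + 2) - X 1 ^ (e + 1) * gen1 k (e + 2)
      = C ((e + 2 : ℕ) : k) * (X 0 ^ (e + 1) * X 2 ^ (e + 1) * X 3) := by
    rw [hg1, hg3, ← hDC]; ring
  have hw5 : X 3 * gen5 k (e + 2) = C (((e + 2 : ℕ) : k)⁻¹)
      * (X 0 ^ (e + 1) * gen3 k (e + 2) - X 1 ^ (e + 1) * gen1 k (e + 2)) := by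
    rw [hinner, ← mul_assoc, ← C_mul, inv_mul_cancel₀ hchar, C_1, one_mul, hg5]; ring
  have hmem5 : ∀ ξ ∈ ({X 0, X 1, X 2, X 3} : Set (MvPolynomial (Fin 4) k)),
      ξ * gen5 k (e + 2)
        ∈ Ideal.span {gen1 k (e + 2), gen2 k (e + 2), gen3 k (e + 2), gen4 k (e + 2)} := by
    intro ξ hξ
    simp only [Set.mem_insert_iff, Set.mem_singleton_iff] at hξ
    rcases hξ with rfl | rfl | rfl | rfl
    · rw [hx5]
      exact sub_mem (Ideal.mul_mem_left _ _ (Ideal.subset_span (by simp)))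
        (Ideal.mul_mem_left _ _ (Ideal.mul_mem_left _ _ (Ideal.subset_span (by simp))))
    · rw [hy5]
      exact Ideal.mul_mem_left _ _ (Ideal.subset_span (by simp))
    · rw [hz5]
      exact Ideal.mul_mem_left _ _ (Ideal.subset_span (by simp))
    · rw [hw5]
      exact Ideal.mul_mem_left _ _ (sub_mem
        (Ideal.mul_mem_left _ _ (Ideal.subset_span (by simp)))
        (Ideal.mul_mem_left _ _ (Ideal.subset_span (by simp))))
  have hback : ∀ s : MvPolynomial (Fin 4) k,
      s ∈ Ideal.span {gen1 k (e + 2), gen2 k (e + 2), gen3 k (e + 2), gen4 k (e + 2)}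
        ⊔ Ideal.span {gen5 k (e + 2)} →
      ∀ g ∈ Ideal.span ({X 0, X 1, X 2, X 3} : Set (MvPolynomial (Fin 4) k)),
        g * s ∈ Ideal.span {gen1 k (e + 2), gen2 k (e + 2), gen3 k (e + 2), gen4 k (e + 2)} := by
    intro s hs g hg
    obtain ⟨u, hu, v, hv, rfl⟩ := Submodule.mem_sup.mp hs
    obtain ⟨t, rfl⟩ := Ideal.mem_span_singleton'.mp hv
    rw [mul_add]
    refine add_mem (Ideal.mul_mem_left _ _ hu) ?_
    refine Submodule.span_induction
      (p := fun g _ => ∀ t' : MvPolynomial (Fin 4) k, g * (t' * gen5 k (e + 2))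
        ∈ Ideal.span {gen1 k (e + 2), gen2 k (e + 2), gen3 k (e + 2), gen4 k (e + 2)})
      ?_ ?_ ?_ ?_ hg t
    · intro ξ hξ t'
      have hcomm : ξ * (t' * gen5 k (e + 2)) = t' * (ξ * gen5 k (e + 2)) := by ring
      rw [hcomm]
      exact Ideal.mul_mem_left _ _ (hmem5 ξ hξ)
    · intro t'; rw [zero_mul]; exact zero_mem _
    · intro u' v' _ _ hu' hv' t'
      rw [add_mul]; exact add_mem (hu' t') (hv' t')
    · intro a u' _ hu' t'
      rw [smul_eq_mul]
      have hcomm : a * u' * (t' * gen5 k (e + 2)) = u' * (a * t' * gen5 k (e + 2)) := by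
        ring
      rw [hcomm]
      exact hu' (a * t')
  have hfwd : ∀ (s : MvPolynomial (Fin 4) k) (N : ℕ),
      X 3 ^ N * s ∈ Ideal.span {gen1 k (e + 2), gen2 k (e + 2), gen3 k (e + 2), gen4 k (e + 2)} →
      s ∈ Ideal.span {gen1 k (e + 2), gen2 k (e + 2), gen3 k (e + 2), gen4 k (e + 2)}
        ⊔ Ideal.span {gen5 k (e + 2)} := by
    intro s N hNs
    have hk : X 3 ^ N * s ∈ KK k (e + 2) := hJleK hNs
    have hL := L_KK k (e + 2) hd2 hk
    rw [L_X3_pow_mul] at hL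
    have hx3 : (X 3 : MvPolynomial (Fin 4) k) ^ N ≠ 0 := pow_ne_zero _ (X_ne_zero _)
    have hLs : L k (e + 2) s = 0 := by
      rcases mul_eq_zero.mp hL with h | h
      · exact absurd h hx3
      · exact h
    have hsub := sub_L_mem k (e + 2) hd2 s
    rw [hLs, sub_zero] at hsub
    rw [hsup]
    exact hsub
  refine ⟨?_, ?_, ?_, ?_, ?_⟩
  · -- part 1 : the span of the partials is J
    apply le_antisymm
    · rw [Ideal.span_le]
      rintro t ⟨i, rfl⟩
      fin_cases i
      · show pderiv (0 : Fin 4) F ∈ _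
        rw [hp0]
        exact Ideal.mul_mem_left _ _ (Ideal.subset_span (by simp))
      · show pderiv (1 : Fin 4) F ∈ _
        rw [hp1]
        exact Ideal.subset_span (by simp)
      · show pderiv (2 : Fin 4) F ∈ _
        rw [hp2]
        exact Ideal.subset_span (by simp)
      · show pderiv (3 : Fin 4) F ∈ _
        rw [hp3]
        exact Ideal.subset_span (by simp)
    · rw [Ideal.span_le]
      intro t ht
      simp only [Set.mem_insert_iff, Set.mem_singleton_iff] at ht
      rcases ht with rfl | rfl | rfl | rfl
      · have heq : (X 0 : MvPolynomial (Fin 4) k) ^ (e + 1) * X 1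
            = C (((e + 2 : ℕ) : k)⁻¹) * pderiv (0 : Fin 4) F := by
          rw [hp0, hDC, ← mul_assoc, ← C_mul, inv_mul_cancel₀ hchar, C_1, one_mul]
        rw [heq]
        exact Ideal.mul_mem_left _ _ (Ideal.subset_span ⟨0, rfl⟩)
      · rw [← hp1]; exact Ideal.subset_span ⟨1, rfl⟩
      · rw [← hp2]; exact Ideal.subset_span ⟨2, rfl⟩
      · rw [← hp3]; exact Ideal.subset_span ⟨3, rfl⟩
  · -- part 2 : saturation
    intro s
    constructor
    · rintro ⟨N, hN⟩
      have hw3 : (X 3 : MvPolynomial (Fin 4) k) ∈ Ideal.span {X 0, X 1, X 2, X 3} :=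
        Ideal.subset_span (by simp)
      have hwN := hN _ (Ideal.pow_mem_pow hw3 N)
      rw [hJgen] at hwN
      rw [hJgen, ← hg5]
      exact hfwd s N hwN
    · intro hs
      refine ⟨1, ?_⟩
      intro g hg
      rw [pow_one] at hg
      rw [hJgen]
      rw [hJgen, ← hg5] at hs
      exact hback s hs g hg
  · -- part 3 : socle
    intro s
    constructor
    · intro hsoc
      have hw3 : (X 3 : MvPolynomial (Fin 4) k) ∈ Ideal.span {X 0, X 1, X 2, X 3} :=
        Ideal.subset_span (by simp)
      have hws := hsoc _ hw3
      rw [hJgen] at hws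
      have hws1 : X 3 ^ 1 * s ∈ Ideal.span
          {gen1 k (e + 2), gen2 k (e + 2), gen3 k (e + 2), gen4 k (e + 2)} := by
        rw [pow_one]; exact hws
      rw [hJgen, ← hg5]
      exact hfwd s 1 hws1
    · intro hs g hg
      rw [hJgen]
      rw [hJgen, ← hg5] at hs
      exact hback s hs g hg
  · -- part 4 : homogeneity
    have hh : MvPolynomial.IsHomogeneous ((X 0 : MvPolynomial (Fin 4) k) ^ (e + 1)
        * X 2 ^ (e + 1)) ((e + 1) + (e + 1)) :=
      (isHomogeneous_X_pow _ _).mul (isHomogeneous_X_pow _ _)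
    have h2 : 2 * (e + 2) - 2 = (e + 1) + (e + 1) := by omega
    rw [h2]
    exact hh
  · -- part 5 : the fresh socle generator is not in J
    intro hmem
    rw [← hg1, ← hg2, ← hg3, ← hg4, ← hg5] at hmem
    obtain ⟨a1, z1, hz1, he1⟩ := Ideal.mem_span_insert.mp hmem
    obtain ⟨a2, z2, hz2, he2⟩ := Ideal.mem_span_insert.mp hz1
    obtain ⟨a3, z3, hz3, he3⟩ := Ideal.mem_span_insert.mp hz2
    obtain ⟨a4, he4⟩ := Ideal.mem_span_singleton'.mp hz3
    set μ : Fin 4 →₀ ℕ := mk4 (e + 1) 0 (e + 1) 0 with hμ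
    have key : ∀ (p : MvPolynomial (Fin 4) k) (τ : Fin 4 →₀ ℕ) (r : k),
        ¬ τ ≤ μ → coeff μ (p * monomial τ r) = 0 := by
      intro p τ r h
      rw [coeff_mul_monomial', if_neg h]
    have hco : coeff μ (gen5 k (e + 2)) = 1 := by
      rw [gen5, h1, coeff_monomial, if_pos rfl]
    have hc1 : coeff μ (a1 * gen1 k (e + 2)) = 0 := by
      rw [gen1, h1]
      refine key _ _ _ ?_
      intro hle
      have h := Finsupp.le_def.mp hle 1
      simp [hμ] at h
    have hc2 : coeff μ (a2 * gen2 k (e + 2)) = 0 := by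
      rw [gen2, h1, mul_add, coeff_add]
      rw [key _ _ _ ?_, key _ _ _ ?_, add_zero]
      · intro hle
        have h := Finsupp.le_def.mp hle 1
        simp [hμ] at h
      · intro hle
        have h := Finsupp.le_def.mp hle 0
        simp [hμ] at h
    have hc3 : coeff μ (a3 * gen3 k (e + 2)) = 0 := by
      rw [gen3, h1, mul_add, coeff_add]
      rw [key _ _ _ ?_, key _ _ _ ?_, add_zero]
      · intro hle
        have h := Finsupp.le_def.mp hle 3
        simp [hμ] at h
      · intro hle
        have h := Finsupp.le_def.mp hle 1
        simp [hμ] at h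
    have hc4 : coeff μ (a4 * gen4 k (e + 2)) = 0 := by
      rw [gen4]
      refine key _ _ _ ?_
      intro hle
      have h := Finsupp.le_def.mp hle 2
      simp [hμ] at h
    rw [he1, he2, he3, ← he4, coeff_add, coeff_add, coeff_add,
      hc1, hc2, hc3, hc4] at hco
    norm_num at hco

/-- Let `d ≥ 2` with `char(k) ∤ d`, and let
`f = x^d y + y^d z + z^d w ∈ S = k[x,y,z,w]`, with gradient ideal
`J = (x^{d−1}y, x^d + d y^{d−1}z, y^d + d z^{d−1}w, z^d)` (the span of the partial
derivatives of `f`).  Then the saturation `J^sat = J : (x,y,z,w)^∞` equals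
`(J, x^{d−1}z^{d−1})`, and `J^sat/J` is the socle of `S/J` (i.e. `J : (x,y,z,w) = J^sat`),
so the socle degree of `S/J` is `2d − 2`: the fresh socle generator `x^{d−1}z^{d−1}` is
homogeneous of degree `2d − 2` and does not lie in `J`. -/
theorem saturation_and_socle_of_gradient_ideal
    (k : Type) [Field k] (d : ℕ) (hd : 2 ≤ d) (hchar : (d : k) ≠ 0)
    (x y z w f : MvPolynomial (Fin 4) k)
    (hx : x = X 0) (hy : y = X 1) (hz : z = X 2) (hw : w = X 3)
    (hf : f = x ^ d * y + y ^ d * z + z ^ d * w)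
    (J m : Ideal (MvPolynomial (Fin 4) k))
    (hJ : J = Ideal.span {x ^ (d - 1) * y,
      x ^ d + (d : MvPolynomial (Fin 4) k) * y ^ (d - 1) * z,
      y ^ d + (d : MvPolynomial (Fin 4) k) * z ^ (d - 1) * w, z ^ d})
    (hm : m = Ideal.span {x, y, z, w}) :
    Ideal.span (Set.range fun i : Fin 4 => MvPolynomial.pderiv i f) = J ∧
    (∀ s : MvPolynomial (Fin 4) k,
      (∃ N : ℕ, ∀ g ∈ m ^ N, g * s ∈ J) ↔
        s ∈ J ⊔ Ideal.span {x ^ (d - 1) * z ^ (d - 1)}) ∧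
    (∀ s : MvPolynomial (Fin 4) k,
      (∀ g ∈ m, g * s ∈ J) ↔ s ∈ J ⊔ Ideal.span {x ^ (d - 1) * z ^ (d - 1)}) ∧
    MvPolynomial.IsHomogeneous (x ^ (d - 1) * z ^ (d - 1)) (2 * d - 2) ∧
    x ^ (d - 1) * z ^ (d - 1) ∉ J := by
  exact main_statement k d hd hchar x y z w f hx hy hz hw hf J m hJ hm
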